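/- Let m > 1 and m' = m/(m−1). Define P(u,w) = (m'/m) u^m − m' u w + w₊^{m'} and N(u,w) = u^m − 2 u^{m/2} w₊^{m'/2} + w₊^{m'} for u ≥ 0, w ∈ ℝ, where w₊ = max(w,0). Then N(u,w) ≤ m·P(u,w) for all u ≥ 0 and w ∈ ℝ. -/

import Mathlib

/-- N(u,w) ≤ m · P(u,w) for porous-medium nonlinearities. -/
theorem stmt10 (m : ℝ) (hm : 1 < m) (u w : ℝ) (hu : 0 ≤ u) :
    u ^ m - 2 * u ^ (m / 2) * (max w 0) ^ (m / (m - 1) / 2) + (max w 0) ^ (m / (m - 1)) ≤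
      m * ((m / (m - 1) / m) * u ^ m - (m / (m - 1)) * u * w
        + (max w 0) ^ (m / (m - 1))) := by
  have hm0 : (0:ℝ) < m := by linarith
  have hm1 : (0:ℝ) < m - 1 := by linarith
  set p := m / (m - 1) with hp
  have hp0 : (0:ℝ) < p := by positivity
  set v := max w 0 with hv
  have hv0 : (0:ℝ) ≤ v := le_max_right _ _
  have hwv : w ≤ v := le_max_left _ _
  set x := u ^ (m / 2) with hx
  set y := v ^ (p / 2) with hy
  have hx0 : (0:ℝ) ≤ x := Real.rpow_nonneg hu _
  have hy0 : (0:ℝ) ≤ y := Real.rpow_nonneg hv0 _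
  have hxsq : x * x = u ^ m := by
    rw [hx, ← Real.rpow_add_of_nonneg hu (by positivity) (by positivity)]
    norm_num
  have hysq : y * y = v ^ p := by
    rw [hy, ← Real.rpow_add_of_nonneg hv0 (by positivity) (by positivity)]
    norm_num
  have hconj : 1 / m + 1 / p = 1 := by
    rw [hp]; field_simp; ring
  -- key equality: u * v as a weighted geometric mean
  have huv : u * v = (x*x) ^ (1/m^2) * ((y*y) ^ (1/p^2)) * ((x*y) ^ (2/(m*p))) := by
    have h1 : (x*x) ^ (1/m^2) = u ^ (1/m) := by
      rw [hxsq, ← Real.rpow_mul hu]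
      congr 1
      field_simp
    have h2 : (y*y) ^ (1/p^2) = v ^ (1/p) := by
      rw [hysq, ← Real.rpow_mul hv0]
      congr 1
      field_simp
    have h3 : (x*y) ^ (2/(m*p)) = u ^ (1/p) * v ^ (1/m) := by
      rw [Real.mul_rpow hx0 hy0, hx, hy, ← Real.rpow_mul hu, ← Real.rpow_mul hv0]
      congr 2 <;> field_simp <;> ring_nf
    rw [h1, h2, h3]
    have : u ^ (1/m) * v ^ (1/p) * (u ^ (1/p) * v ^ (1/m))
        = (u ^ (1/m) * u ^ (1/p)) * (v ^ (1/p) * v ^ (1/m)) := by ring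
    rw [this, ← Real.rpow_add_of_nonneg hu (by positivity) (by positivity),
      ← Real.rpow_add_of_nonneg hv0 (by positivity) (by positivity), hconj]
    rw [show 1/p + 1/m = 1 by linarith]
    rw [Real.rpow_one, Real.rpow_one]
  have hwsum : 1/m^2 + 1/p^2 + 2/(m*p) = 1 := by
    rw [hp]; field_simp; ring
  have key : u * v ≤ (1/m^2) * (x*x) + (1/p^2) * (y*y) + (2/(m*p)) * (x*y) := by
    rw [huv]
    exact Real.geom_mean_le_arith_mean3_weighted (by positivity) (by positivity)
      (by positivity) (by positivity) (by positivity) (by positivity) hwsum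
  have key2 : m * p * (u * w) ≤ (p/m) * (x*x) + (m/p) * (y*y) + 2 * (x*y) := by
    have h0 : m * p * (u * w) ≤ m * p * (u * v) := by
      have h := mul_le_mul_of_nonneg_left (mul_le_mul_of_nonneg_left hwv hu) (le_of_lt (by positivity : (0:ℝ) < m * p))
      linarith
    have h1 : m * p * (u * v) ≤ m * p * ((1/m^2) * (x*x) + (1/p^2) * (y*y) + (2/(m*p)) * (x*y)) :=
      mul_le_mul_of_nonneg_left key (by positivity)
    have h2 : m * p * ((1/m^2) * (x*x) + (1/p^2) * (y*y) + (2/(m*p)) * (x*y))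
        = (p/m) * (x*x) + (m/p) * (y*y) + 2 * (x*y) := by
      field_simp
    linarith
  have e1 : p - 1 = p / m := by rw [hp]; field_simp; ring
  have e2 : m - 1 = m / p := by rw [hp]; field_simp
  have key3 : m * p * (u * w) ≤ (p - 1) * (x*x) + (m - 1) * (y*y) + 2 * (x*y) := by
    rw [e1, e2]; exact key2
  rw [← hxsq, ← hysq]
  have goalEq : m * (p / m * (x*x) - p * u * w + y*y)
      = p * (x*x) - m * p * (u * w) + m * (y*y) := by
    field_simp
  rw [goalEq]
  nlinarith [key3]
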